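/- arXiv:2411.15391 — 3 statements merged into one kernel-verified Lean document; each statement's English description precedes it below -/
import Mathlib

section
/- For every A ∈ ℝ² and every φ ∈ ℝ, the point A inspects P_φ if and only if A lies in the closed halfspace bounded by the tangent line to the unit circle at P_φ that does not contain the interior of the unit disk; equivalently, A inspects P_φ if and only if ⟨A, P_φ⟩ ≥ 1, where ⟨·,·⟩ is the Euclidean inner product. -/
open Real Set

/-- The point of the unit circle at angle `φ`. -/
noncomputable def Ppt (φ : ℝ) : EuclideanSpace ℝ (Fin 2) := WithLp.toLp 2 ![Real.cos φ, Real.sin φ]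

/-- `A` inspects the perimeter point `P_φ` if no convex combination of `A` and `P_φ`
lies in the open unit disk. -/
def Inspects (A : EuclideanSpace ℝ (Fin 2)) (φ : ℝ) : Prop :=
  ∀ s ∈ Set.Icc (0:ℝ) 1, 1 ≤ ‖(1 - s) • A + s • Ppt φ‖

lemma normPpt (φ : ℝ) : ‖Ppt φ‖ = 1 := by
  have : ‖Ppt φ‖ = Real.sqrt (∑ i : Fin 2, (Ppt φ i)^2) := by
    rw [EuclideanSpace.norm_eq]
    congr 1
    apply Finset.sum_congr rfl
    intro i _
    rw [Real.norm_eq_abs, sq_abs]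
  rw [this]
  have : (∑ i : Fin 2, (Ppt φ i)^2) = Real.cos φ ^ 2 + Real.sin φ ^ 2 := by
    simp [Fin.sum_univ_two, Ppt]
  rw [this, Real.cos_sq_add_sin_sq, Real.sqrt_one]

theorem inspects_iff_inner_ge_one (A : EuclideanSpace ℝ (Fin 2)) (φ : ℝ) :
    Inspects A φ ↔ 1 ≤ (inner ℝ A (Ppt φ) : ℝ) := by
  set P := Ppt φ with hP
  set t : ℝ := inner ℝ A P with ht
  have hPn : ‖P‖ = 1 := normPpt φ
  have hAn : (0:ℝ) ≤ ‖A‖ := norm_nonneg _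
  have htA : t ≤ ‖A‖ := by
    calc t ≤ ‖A‖ * ‖P‖ := real_inner_le_norm A P
    _ = ‖A‖ := by rw [hPn, mul_one]
  have expand : ∀ s : ℝ, ‖(1 - s) • A + s • P‖^2
      = (1-s)^2 * ‖A‖^2 + 2*((1-s)*s)*t + s^2 := by
    intro s
    rw [norm_add_sq_real, real_inner_smul_left, real_inner_smul_right,
      norm_smul, norm_smul, mul_pow, mul_pow, Real.norm_eq_abs, Real.norm_eq_abs,
      sq_abs, sq_abs, hPn]
    ring
  constructor
  · intro h
    by_contra hlt
    push_neg at hlt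
    -- t < 1, find s < 1 with f(s) < 1
    have hC : (0:ℝ) ≤ ‖A‖^2 - 2*t + 1 := by nlinarith [real_inner_le_norm A P]
    set C : ℝ := ‖A‖^2 - 2*t + 1 with hCdef
    have hC0 : 0 < C := by
      rcases lt_or_eq_of_le hC with h' | h'
      · exact h'
      · exfalso
        -- C = 0 forces ‖A‖ = 1 and t = 1
        nlinarith
    set ε : ℝ := min 1 ((1-t)/C) with hε
    have hε0 : 0 < ε := lt_min one_pos (div_pos (by linarith) hC0)
    have hε1 : ε ≤ 1 := min_le_left _ _
    have hεC : ε * C ≤ 1 - t := by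
      have := min_le_right 1 ((1-t)/C)
      calc ε * C ≤ ((1-t)/C) * C := by nlinarith
      _ = 1 - t := by field_simp
    have hmem : 1 - ε ∈ Set.Icc (0:ℝ) 1 := ⟨by linarith, by linarith⟩
    have h1 := h (1-ε) hmem
    have h2 : 1 ≤ ‖(1-(1-ε)) • A + (1-ε) • P‖^2 := by nlinarith [norm_nonneg ((1-(1-ε)) • A + (1-ε) • P)]
    rw [expand] at h2
    nlinarith
  · intro h s hs
    obtain ⟨hs0, hs1⟩ := hs
    have h2 : 1 ≤ ‖(1 - s) • A + s • P‖^2 := by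
      rw [expand]
      have hA2 : t ≤ ‖A‖^2 := by nlinarith
      nlinarith [mul_nonneg (sq_nonneg (1-s)) (sub_nonneg.2 hA2),
        mul_nonneg (sub_nonneg.2 hs1) (mul_nonneg hs0 (by linarith : (0:ℝ) ≤ t)),
        mul_nonneg (sub_nonneg.2 h) (mul_nonneg (sub_nonneg.2 hs1) (by linarith : (0:ℝ) ≤ 1 + s))]
    nlinarith [norm_nonneg ((1 - s) • A + s • P)]
end

section
/- For every c ∈ [0, 2π] there exists an inspection trajectory with horizon T = W(c) that is feasible for the arc [0,c]; that is, there is a 1-Lipschitz map γ : [0, W(c)] → ℝ² with γ(0) = (0,0) such that for every φ ∈ [0,c] there exists t ∈ [0, W(c)] with γ(t) inspecting P_φ. -/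
open Real Set

/-- The optimal worst-case inspection cost for an arc of length `c`. -/
noncomputable def W (c : ℝ) : ℝ :=
  if c ≤ 2 * π / 3 then 1 / Real.cos (c / 2)
  else if c ≤ 5 * π / 6 then 1 - 2 * Real.cos c
  else 1 + Real.sqrt 3 + c - 5 * π / 6

open scoped RealInnerProductSpace

lemma norm_Ppt (a : ℝ) : ‖Ppt a‖ = 1 := by
  simp [Ppt, EuclideanSpace.norm_eq, Fin.sum_univ_two, Real.norm_eq_abs, sq_abs,
    Real.sin_sq_add_cos_sq]

lemma inner_Ppt (a b : ℝ) : ⟪Ppt a, Ppt b⟫ = Real.cos (a - b) := by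
  simp [Ppt, PiLp.inner_apply, Fin.sum_univ_two, Real.cos_sub]
  ring

lemma inspects_of_inner {A : EuclideanSpace ℝ (Fin 2)} {φ : ℝ}
    (h : 1 ≤ ⟪A, Ppt φ⟫) : Inspects A φ := by
  intro s hs
  obtain ⟨hs0, hs1⟩ := hs
  have h1 : ⟪(1 - s) • A + s • Ppt φ, Ppt φ⟫ ≤ ‖(1 - s) • A + s • Ppt φ‖ * ‖Ppt φ‖ :=
    real_inner_le_norm _ _
  rw [norm_Ppt, mul_one] at h1
  have h2 : ⟪(1 - s) • A + s • Ppt φ, Ppt φ⟫ = (1 - s) * ⟪A, Ppt φ⟫ + s * 1 := by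
    rw [inner_add_left, real_inner_smul_left, real_inner_smul_left, inner_Ppt, sub_self,
      Real.cos_zero]
  nlinarith

lemma lipschitz_Ppt : LipschitzWith 1 Ppt := by
  rw [lipschitzWith_iff_dist_le_mul]
  intro x y
  rw [dist_eq_norm, Real.dist_eq, NNReal.coe_one, one_mul]
  have hc : 1 - (x - y)^2/2 ≤ Real.cos (x - y) := Real.one_sub_sq_div_two_le_cos
  have hn : ‖Ppt x - Ppt y‖^2 = 2 - 2*Real.cos (x-y) := by
    rw [← real_inner_self_eq_norm_sq]
    rw [inner_sub_sub_self]
    rw [inner_Ppt, inner_Ppt, inner_Ppt, inner_Ppt]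
    simp [Real.cos_sub, Real.cos_zero]
    ring
  have h0 : 0 ≤ ‖Ppt x - Ppt y‖ := norm_nonneg _
  nlinarith [abs_nonneg (x - y), sq_abs (x - y)]

lemma lip_line (a : EuclideanSpace ℝ (Fin 2)) (b : ℝ) (v : EuclideanSpace ℝ (Fin 2))
    (hv : ‖v‖ ≤ 1) :
    LipschitzWith 1 (fun t : ℝ => a + (t - b) • v) := by
  rw [lipschitzWith_iff_dist_le_mul]
  intro x y
  rw [dist_eq_norm, Real.dist_eq, NNReal.coe_one, one_mul]
  have : a + (x - b) • v - (a + (y - b) • v) = (x - y) • v := by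
    rw [sub_smul, sub_smul, sub_smul]; abel
  rw [this, norm_smul, Real.norm_eq_abs]
  nlinarith [abs_nonneg (x - y), norm_nonneg v]

lemma lip_glue (f g : ℝ → EuclideanSpace ℝ (Fin 2)) (b : ℝ)
    (hf : LipschitzWith 1 f) (hg : LipschitzWith 1 g)
    (h : f b = g b) : LipschitzWith 1 (fun t => if t ≤ b then f t else g t) := by
  rw [lipschitzWith_iff_dist_le_mul] at *
  intro x y
  rw [NNReal.coe_one, one_mul]
  by_cases hx : x ≤ b <;> by_cases hy : y ≤ b <;> simp only [hx, hy, if_true, if_false]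
  · have := hf x y; rw [NNReal.coe_one, one_mul] at this; exact this
  · calc dist (f x) (g y) ≤ dist (f x) (f b) + dist (f b) (g y) := dist_triangle _ _ _
      _ = dist (f x) (f b) + dist (g b) (g y) := by rw [h]
      _ ≤ dist x b + dist b y := by
          have h1 := hf x b; have h2 := hg b y
          rw [NNReal.coe_one, one_mul] at h1 h2; linarith
      _ ≤ dist x y := by
          rw [Real.dist_eq, Real.dist_eq, Real.dist_eq]
          rw [abs_of_nonpos (by linarith), abs_of_nonpos (by linarith),
            abs_of_nonpos (by linarith)]
          linarith
  · calc dist (g x) (f y) ≤ dist (g x) (g b) + dist (g b) (f y) := dist_triangle _ _ _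
      _ = dist (g x) (g b) + dist (f b) (f y) := by rw [h]
      _ ≤ dist x b + dist b y := by
          have h1 := hg x b; have h2 := hf b y
          rw [NNReal.coe_one, one_mul] at h1 h2; linarith
      _ ≤ dist x y := by
          rw [Real.dist_eq, Real.dist_eq, Real.dist_eq]
          rw [abs_of_nonneg (by linarith), abs_of_nonneg (by linarith),
            abs_of_nonneg (by linarith)]
          linarith
  · have := hg x y; rw [NNReal.coe_one, one_mul] at this; exact this

lemma lip_arc (k : ℝ) : LipschitzWith 1 (fun t : ℝ => Ppt (t + k)) := by
  rw [lipschitzWith_iff_dist_le_mul]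
  intro x y
  have h := lipschitzWith_iff_dist_le_mul.mp lipschitz_Ppt (x + k) (y + k)
  have h2 : dist (x + k) (y + k) = dist x y := by
    rw [Real.dist_eq, Real.dist_eq]; ring_nf
  rw [h2] at h
  exact h

lemma key_eq : (2/Real.sqrt 3) • Ppt (π/6) + (Real.sqrt 3 - 2/Real.sqrt 3) • Ppt (5*π/6)
    = Ppt (π/3) := by
  have h3 : Real.sqrt 3 ^ 2 = 3 := Real.sq_sqrt (by norm_num)
  have h3pos : (0:ℝ) < Real.sqrt 3 := Real.sqrt_pos.mpr (by norm_num)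
  have hc56 : Real.cos (5*π/6) = -(Real.sqrt 3/2) := by
    rw [show (5*π/6 : ℝ) = π - π/6 by ring, Real.cos_pi_sub, Real.cos_pi_div_six]
  have hs56 : Real.sin (5*π/6) = 1/2 := by
    rw [show (5*π/6 : ℝ) = π - π/6 by ring, Real.sin_pi_sub, Real.sin_pi_div_six]
  ext i
  fin_cases i <;>
    simp [Ppt, PiLp.add_apply, PiLp.smul_apply, hc56, hs56, Real.cos_pi_div_six,
      Real.sin_pi_div_six, Real.cos_pi_div_three, Real.sin_pi_div_three, smul_eq_mul] <;>
    field_simp <;> nlinarith [h3, h3pos]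
lemma regime1 (c : ℝ) (hc0 : 0 ≤ c) (hc1 : c ≤ 2*π/3) :
    ∃ γ : ℝ → EuclideanSpace ℝ (Fin 2),
      LipschitzOnWith 1 γ (Set.Icc 0 (1/Real.cos (c/2))) ∧ γ 0 = 0 ∧
      ∀ φ ∈ Set.Icc 0 c, ∃ t ∈ Set.Icc 0 (1/Real.cos (c/2)), Inspects (γ t) φ := by
  have hpi := Real.pi_pos
  have hcos : 0 < Real.cos (c/2) := by
    apply Real.cos_pos_of_mem_Ioo
    constructor <;> [linarith; linarith]
  refine ⟨fun t => (0 : EuclideanSpace ℝ (Fin 2)) + (t - 0) • Ppt (c/2),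
    (lip_line _ _ _ (le_of_eq (norm_Ppt _))).lipschitzOnWith, by simp, ?_⟩
  intro φ hφ
  obtain ⟨hφ0, hφc⟩ := hφ
  refine ⟨1/Real.cos (c/2), ⟨by positivity, le_refl _⟩, inspects_of_inner ?_⟩
  rw [inner_add_left, real_inner_smul_left, inner_Ppt]
  simp only [inner_zero_left, zero_add, sub_zero]
  have h1 : Real.cos (c/2) ≤ Real.cos (c/2 - φ) := by
    rw [← Real.cos_abs (c/2 - φ)]
    apply Real.cos_le_cos_of_nonneg_of_le_pi (abs_nonneg _) (by linarith)
    rw [abs_le]; constructor <;> linarith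
  rw [one_div, inv_mul_eq_div, le_div_iff₀ hcos, one_mul]
  exact h1

lemma regime2 (c : ℝ) (hc1 : 2*π/3 < c) (hc2 : c ≤ 5*π/6) :
    ∃ γ : ℝ → EuclideanSpace ℝ (Fin 2),
      LipschitzOnWith 1 γ (Set.Icc 0 (1 - 2*Real.cos c)) ∧ γ 0 = 0 ∧
      ∀ φ ∈ Set.Icc 0 c, ∃ t ∈ Set.Icc 0 (1 - 2*Real.cos c), Inspects (γ t) φ := by
  have hpi := Real.pi_pos
  have hT1 : Real.cos c < -(1/2) := by
    have h := Real.cos_lt_cos_of_nonneg_of_le_pi (by positivity : (0:ℝ) ≤ 2*π/3)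
      (by linarith) hc1
    have h2 : Real.cos (2*π/3) = -(1/2) := by
      rw [show (2*π/3 : ℝ) = π - π/3 by ring, Real.cos_pi_sub, Real.cos_pi_div_three]
    linarith
  have hT2 : -1 ≤ Real.cos c := Real.neg_one_le_cos c
  have hTneg : Real.cos c < 0 := by linarith
  have hTne : Real.cos c ≠ 0 := ne_of_lt hTneg
  have hS : 1/2 ≤ Real.sin c := by
    have h1 : Real.cos (c - π/2) = Real.sin c := by
      rw [show c - π/2 = -(π/2 - c) by ring, Real.cos_neg, Real.cos_pi_div_two_sub]
    have h2 : Real.cos (π/3) ≤ Real.cos (c - π/2) :=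
      Real.cos_le_cos_of_nonneg_of_le_pi (by linarith) (by linarith) (by linarith)
    rw [Real.cos_pi_div_three, h1] at h2
    linarith
  set r : ℝ := -(1/Real.cos c) with hr
  have hrpos : 0 < r := by
    have := one_div_neg.mpr hTneg
    rw [hr]; linarith
  have hd : 0 < (1 - 2*Real.cos c) - r := by
    have hprod : Real.cos c * ((1 - 2*Real.cos c) - r) =
        Real.cos c - 2*(Real.cos c)^2 + 1 := by
      rw [hr]; field_simp; ring
    have hneg : Real.cos c - 2*(Real.cos c)^2 + 1 < 0 := by nlinarith
    nlinarith
  have hW2pos : 0 < 1 - 2*Real.cos c := by nlinarith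
  refine ⟨fun t => if t ≤ r then (0 : EuclideanSpace ℝ (Fin 2)) + (t - 0) • Ppt (π - c)
      else (r • Ppt (π - c)) + (t - r) • Ppt c, ?_, ?_, ?_⟩
  · exact (lip_glue _ _ r (lip_line _ _ _ (le_of_eq (norm_Ppt _)))
      (lip_line _ _ _ (le_of_eq (norm_Ppt _))) (by simp)).lipschitzOnWith
  · simp [hrpos.le]
  · rintro φ ⟨hφ0, hφc⟩
    have hπcos : Real.cos (π - c - φ) = -Real.cos (c + φ) := by
      rw [show π - c - φ = π - (c + φ) by ring, Real.cos_pi_sub]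
    by_cases hcase : φ ≤ 2*π - 2*c
    · refine ⟨r, ⟨hrpos.le, by linarith⟩, inspects_of_inner ?_⟩
      beta_reduce
      rw [if_pos (le_refl r)]
      rw [inner_add_left, real_inner_smul_left, inner_Ppt]
      simp only [inner_zero_left, zero_add, sub_zero]
      rw [hπcos]
      have hkey : Real.cos (c + φ) ≤ Real.cos c := by
        have h1 := Real.cos_sub_cos c (c + φ)
        have h2 : Real.sin ((c - (c+φ))/2) = -Real.sin (φ/2) := by
          rw [show (c - (c+φ))/2 = -(φ/2) by ring, Real.sin_neg]
        have h3 : 0 ≤ Real.sin (φ/2) :=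
          Real.sin_nonneg_of_nonneg_of_le_pi (by linarith) (by linarith)
        have h4 : 0 ≤ Real.sin ((c + (c+φ))/2) :=
          Real.sin_nonneg_of_nonneg_of_le_pi (by linarith) (by linarith)
        nlinarith [h1, h2, h3, h4]
      have heq : r * -Real.cos (c + φ) = Real.cos (c+φ) / Real.cos c := by
        rw [hr]; field_simp
      rw [heq, le_div_iff_of_neg hTneg, one_mul]
      exact hkey
    · push_neg at hcase
      refine ⟨1 - 2*Real.cos c, ⟨hW2pos.le, le_refl _⟩, inspects_of_inner ?_⟩
      beta_reduce
      rw [if_neg (not_le.mpr (by linarith))]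
      rw [inner_add_left, real_inner_smul_left, real_inner_smul_left, inner_Ppt, inner_Ppt]
      rw [show π - c - φ = π - (c + φ) by ring, Real.cos_pi_sub]
      have ha : 0 ≤ Real.cos (c - φ) := by
        apply Real.cos_nonneg_of_mem_Icc
        constructor <;> [linarith; linarith]
      have hb : 0 ≤ Real.sin (c - φ) :=
        Real.sin_nonneg_of_nonneg_of_le_pi (by linarith) (by linarith)
      have hab := Real.sin_sq_add_cos_sq (c - φ)
      have hiden : r * -Real.cos (c + φ) + (1 - 2*Real.cos c - r) * Real.cos (c - φ) =
          Real.cos (c - φ) + 2 * Real.sin c * Real.sin (c - φ) := by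
        have hmul : Real.cos c * (r * -Real.cos (c + φ)
              + (1 - 2*Real.cos c - r) * Real.cos (c - φ)) =
            Real.cos c * (Real.cos (c - φ) + 2 * Real.sin c * Real.sin (c - φ)) := by
          rw [hr, Real.cos_add, Real.cos_sub, Real.sin_sub]
          field_simp
          linear_combination (-(2 * Real.cos c * Real.cos φ)) * Real.sin_sq_add_cos_sq c
        exact mul_left_cancel₀ hTne hmul
      rw [hiden]
      have h5 : (1 - (Real.cos (c-φ) + Real.sin (c-φ))) * (1 + (Real.cos (c-φ) + Real.sin (c-φ))) ≤ 0 := by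
        nlinarith [mul_nonneg ha hb]
      have h6 : 1 ≤ Real.cos (c-φ) + Real.sin (c-φ) := by nlinarith [h5]
      nlinarith [mul_nonneg hb (show (0:ℝ) ≤ 2*Real.sin c - 1 by linarith)]

lemma regime3 (c : ℝ) (hc1 : 5*π/6 < c) :
    ∃ γ : ℝ → EuclideanSpace ℝ (Fin 2),
      LipschitzOnWith 1 γ (Set.Icc 0 (1 + Real.sqrt 3 + c - 5*π/6)) ∧ γ 0 = 0 ∧
      ∀ φ ∈ Set.Icc 0 c, ∃ t ∈ Set.Icc 0 (1 + Real.sqrt 3 + c - 5*π/6),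
        Inspects (γ t) φ := by
  have hpi := Real.pi_pos
  have h3 : Real.sqrt 3 ^ 2 = 3 := Real.sq_sqrt (by norm_num)
  have h3pos : (0:ℝ) < Real.sqrt 3 := Real.sqrt_pos.mpr (by norm_num)
  have hT12 : 2/Real.sqrt 3 < Real.sqrt 3 := by
    rw [div_lt_iff₀ h3pos]; nlinarith
  have hT23 : Real.sqrt 3 < Real.sqrt 3 + (c - 5*π/6) := by linarith
  refine ⟨fun t => if t ≤ 2/Real.sqrt 3 then (0 : EuclideanSpace ℝ (Fin 2)) + (t - 0) • Ppt (π/6)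
      else if t ≤ Real.sqrt 3 then ((2/Real.sqrt 3) • Ppt (π/6)) + (t - 2/Real.sqrt 3) • Ppt (5*π/6)
      else if t ≤ Real.sqrt 3 + (c - 5*π/6) then Ppt (t + (π/3 - Real.sqrt 3))
      else Ppt (c - π/2) + (t - (Real.sqrt 3 + (c - 5*π/6))) • Ppt c, ?_, ?_, ?_⟩
  · apply LipschitzWith.lipschitzOnWith
    apply lip_glue _ _ _ (lip_line _ _ _ (le_of_eq (norm_Ppt _)))
    · apply lip_glue _ _ _ (lip_line _ _ _ (le_of_eq (norm_Ppt _)))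
      · apply lip_glue _ _ _ (lip_arc _) (lip_line _ _ _ (le_of_eq (norm_Ppt _)))
        rw [show Real.sqrt 3 + (c - 5*π/6) + (π/3 - Real.sqrt 3) = c - π/2 by ring]
        simp
      · rw [if_pos (le_of_lt hT23)]
        rw [show Real.sqrt 3 + (π/3 - Real.sqrt 3) = π/3 by ring, ← key_eq]
    · rw [if_pos (le_of_lt hT12)]
      simp
  · beta_reduce
    rw [if_pos (by positivity : (0:ℝ) ≤ 2/Real.sqrt 3)]
    simp
  · rintro φ ⟨hφ0, hφc⟩
    by_cases hA : φ ≤ π/3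
    · refine ⟨2/Real.sqrt 3, ⟨by positivity, by nlinarith⟩, inspects_of_inner ?_⟩
      beta_reduce
      rw [if_pos (le_refl _)]
      rw [inner_add_left, real_inner_smul_left, inner_Ppt]
      simp only [inner_zero_left, zero_add, sub_zero]
      have h1 : Real.cos (π/6) ≤ Real.cos (π/6 - φ) := by
        rw [← Real.cos_abs (π/6 - φ)]
        apply Real.cos_le_cos_of_nonneg_of_le_pi (abs_nonneg _) (by linarith)
        rw [abs_le]; constructor <;> linarith
      rw [Real.cos_pi_div_six] at h1
      rw [div_mul_eq_mul_div, le_div_iff₀ h3pos]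
      nlinarith
    · push_neg at hA
      by_cases hB : φ ≤ c - π/2
      · refine ⟨φ - π/3 + Real.sqrt 3, ⟨by linarith, by linarith⟩, inspects_of_inner ?_⟩
        beta_reduce
        rw [if_neg (not_le.mpr (by nlinarith)), if_neg (not_le.mpr (by linarith)),
          if_pos (show φ - π/3 + Real.sqrt 3 ≤ Real.sqrt 3 + (c - 5*π/6) by linarith)]
        rw [show φ - π/3 + Real.sqrt 3 + (π/3 - Real.sqrt 3) = φ by ring, inner_Ppt,
          sub_self, Real.cos_zero]
      · push_neg at hB
        refine ⟨1 + Real.sqrt 3 + c - 5*π/6, ⟨by nlinarith, le_refl _⟩,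
          inspects_of_inner ?_⟩
        beta_reduce
        rw [if_neg (not_le.mpr (by nlinarith)), if_neg (not_le.mpr (by nlinarith)),
          if_neg (not_le.mpr (by nlinarith))]
        rw [inner_add_left, real_inner_smul_left, inner_Ppt, inner_Ppt]
        rw [show 1 + Real.sqrt 3 + c - 5*π/6 - (Real.sqrt 3 + (c - 5*π/6)) = 1 by ring,
          one_mul]
        rw [show c - π/2 - φ = -(π/2 - (c - φ)) by ring, Real.cos_neg,
          Real.cos_pi_div_two_sub]
        have ha : 0 ≤ Real.cos (c - φ) := by
          apply Real.cos_nonneg_of_mem_Icc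
          constructor <;> linarith
        have hb : 0 ≤ Real.sin (c - φ) :=
          Real.sin_nonneg_of_nonneg_of_le_pi (by linarith) (by linarith)
        have hab := Real.sin_sq_add_cos_sq (c - φ)
        have h5 : (1 - (Real.cos (c-φ) + Real.sin (c-φ)))
            * (1 + (Real.cos (c-φ) + Real.sin (c-φ))) ≤ 0 := by
          nlinarith [mul_nonneg ha hb]
        nlinarith [h5]

theorem partial_inspection_upper_bound (c : ℝ) (hc : c ∈ Set.Icc 0 (2*π)) :
    ∃ γ : ℝ → EuclideanSpace ℝ (Fin 2),
      LipschitzOnWith 1 γ (Set.Icc 0 (W c)) ∧ γ 0 = 0 ∧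
      ∀ φ ∈ Set.Icc 0 c, ∃ t ∈ Set.Icc 0 (W c), Inspects (γ t) φ := by
  obtain ⟨hc0, hc2⟩ := hc
  by_cases h1 : c ≤ 2*π/3
  · have hW : W c = 1/Real.cos (c/2) := by
      rw [W, if_pos (by linarith : c ≤ 2 * π / 3)]
    rw [hW]
    exact regime1 c hc0 h1
  · push_neg at h1
    by_cases h2 : c ≤ 5*π/6
    · have hW : W c = 1 - 2*Real.cos c := by
        rw [W, if_neg (by push_neg; linarith), if_pos (by linarith : c ≤ 5 * π / 6)]
      rw [hW]
      exact regime2 c h1 h2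
    · push_neg at h2
      have hW : W c = 1 + Real.sqrt 3 + c - 5*π/6 := by
        rw [W, if_neg (by push_neg; linarith), if_neg (by push_neg; linarith)]
      rw [hW]
      exact regime3 c h2
end

section
/- Let 0 < c < π and define γ : [0, 1/cos(c/2)] → ℝ² by γ(t) = t·(cos(c/2), sin(c/2)) (the agent moves along the straight segment from the origin to the point (1, tan(c/2)) of length 1/cos(c/2)). Then for every φ ∈ [0, c] there exists t ∈ [0, 1/cos(c/2)] with γ(t) inspecting P_φ, and the average inspection time satisfies (1/c)·∫₀^{c} inspect_γ(φ) dφ = (1/c)·log((1 + sin(c/2))/(1 − sin(c/2))), where inspect_γ(φ) := inf{ t ∈ [0, 1/cos(c/2)] : γ(t) inspects P_φ }. -/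
open Real Set

lemma norm_sq_combo (a b α β : ℝ) :
    ‖a • Ppt α + b • Ppt β‖ ^ 2 = a^2 + 2*a*b*Real.cos (α - β) + b^2 := by
  rw [EuclideanSpace.norm_eq, Real.sq_sqrt (by positivity)]
  simp [Ppt, Fin.sum_univ_two, Real.cos_sub, Real.norm_eq_abs, sq_abs]
  nlinarith [Real.sin_sq_add_cos_sq α, Real.sin_sq_add_cos_sq β]

lemma inspects_of_le (t ψ φ : ℝ) (h1 : 1 ≤ t * Real.cos (φ - ψ)) (ht : 1 ≤ t) :
    Inspects (t • Ppt ψ) φ := by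
  intro s hs
  rw [smul_smul]
  have hn := norm_sq_combo ((1 - s) * t) s ψ φ
  have hcos : Real.cos (ψ - φ) = Real.cos (φ - ψ) := by rw [← Real.cos_neg, neg_sub]
  rw [hcos] at hn
  have hv := norm_nonneg (((1 - s) * t) • Ppt ψ + s • Ppt φ)
  have hA : 1 ≤ ‖((1 - s) * t) • Ppt ψ + s • Ppt φ‖ ^ 2 := by
    rw [hn]
    nlinarith [hs.1, hs.2, mul_nonneg (mul_nonneg hs.1 (sub_nonneg.2 hs.2)) (sub_nonneg.2 h1),
      mul_nonneg (sq_nonneg (1 - s)) (by nlinarith : (0:ℝ) ≤ t ^ 2 - 1)]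
  nlinarith [hA, hv]

lemma le_of_inspects (t ψ φ : ℝ) (ht0 : 0 ≤ t) (hc0 : 0 < Real.cos (φ - ψ))
    (h : Inspects (t • Ppt ψ) φ) : 1 ≤ t * Real.cos (φ - ψ) := by
  by_contra hlt
  push_neg at hlt
  have hc1 : Real.cos (φ - ψ) ≤ 1 := Real.cos_le_one _
  set c' := Real.cos (φ - ψ) with hc'
  have hd : (0:ℝ) < t ^ 2 + 2 := by positivity
  set ε := (1 - t * c') / (t ^ 2 + 2) with hε
  have htc0 : 0 ≤ t * c' := mul_nonneg ht0 hc0.le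
  have hε0 : 0 < ε := div_pos (by linarith) hd
  have hε1 : ε ≤ 1 := by rw [div_le_one hd]; nlinarith
  have hkey : ε * (t ^ 2 + 2) = 1 - t * c' := div_mul_cancel₀ _ (ne_of_gt hd)
  have h2 := h (1 - ε) ⟨by linarith, by linarith⟩
  rw [smul_smul] at h2
  have hn := norm_sq_combo ((1 - (1 - ε)) * t) (1 - ε) ψ φ
  have hcos : Real.cos (ψ - φ) = c' := by rw [← Real.cos_neg, neg_sub]
  rw [hcos] at hn
  have hsq : 1 ≤ ‖((1 - (1 - ε)) * t) • Ppt ψ + (1 - ε) • Ppt φ‖ ^ 2 := by nlinarith [h2]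
  rw [hn] at hsq
  -- hsq : 1 ≤ (ε t)^2 + 2 ε t (1-ε) c' + (1-ε)^2
  have hB : 0 ≤ ε * t ^ 2 + 2 * (1 - ε) * (t * c') - (2 - ε) := by
    nlinarith [hε0, hsq]
  have h5 : ε * (t ^ 2 + 1 - 2 * (t * c')) ≤ ε * (t ^ 2 + 2) :=
    mul_le_mul_of_nonneg_left (by nlinarith) hε0.le
  nlinarith [hB, h5, hkey]

lemma sec_integral (c : ℝ) (hc : c ∈ Set.Ioo 0 π) :
    ∫ θ in (-(c/2))..(c/2), 1 / Real.cos θ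
      = Real.log ((1 + Real.sin (c/2)) / (1 - Real.sin (c/2))) := by
  have hpi := Real.pi_pos
  have hhalf : c / 2 < π / 2 := by linarith [hc.2]
  have hcos : ∀ x ∈ Set.uIcc (-(c/2)) (c/2), 0 < Real.cos x := by
    intro x hx
    rw [Set.uIcc_of_le (by linarith [hc.1])] at hx
    exact Real.cos_pos_of_mem_Ioo ⟨by linarith [hx.1], by linarith [hx.2]⟩
  have hsin : ∀ x ∈ Set.uIcc (-(c/2)) (c/2), 0 < 1 + Real.sin x := by
    intro x hx
    nlinarith [Real.sin_sq_add_cos_sq x, hcos x hx, Real.neg_one_le_sin x]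
  have hderiv : ∀ x ∈ Set.uIcc (-(c/2)) (c/2),
      HasDerivAt (fun θ => Real.log (1 + Real.sin θ) - Real.log (Real.cos θ))
        (1 / Real.cos x) x := by
    intro x hx
    have h1 : HasDerivAt (fun θ => Real.log (1 + Real.sin θ))
        (Real.cos x / (1 + Real.sin x)) x :=
      (((Real.hasDerivAt_sin x).const_add 1).log (ne_of_gt (hsin x hx)))
    have h2 : HasDerivAt (fun θ => Real.log (Real.cos θ))
        (-Real.sin x / Real.cos x) x :=
      ((Real.hasDerivAt_cos x).log (ne_of_gt (hcos x hx)))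
    have h3 : HasDerivAt (fun θ => Real.log (1 + Real.sin θ) - Real.log (Real.cos θ))
        (Real.cos x / (1 + Real.sin x) - -Real.sin x / Real.cos x) x := h1.sub h2
    convert h3 using 1
    have hc1 := hcos x hx
    have hs1 := hsin x hx
    field_simp
    nlinarith [Real.sin_sq_add_cos_sq x]
  have hint : IntervalIntegrable (fun θ => 1 / Real.cos θ)
      MeasureTheory.volume (-(c/2)) (c/2) :=
    (continuousOn_const.div Real.continuous_cos.continuousOn
      (fun x hx => ne_of_gt (hcos x hx))).intervalIntegrable
  rw [intervalIntegral.integral_eq_sub_of_hasDerivAt hderiv hint]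
  have hs2 : 0 < Real.sin (c/2) := Real.sin_pos_of_pos_of_lt_pi (by linarith [hc.1]) (by linarith)
  have hs3 : Real.sin (c/2) < 1 := by
    nlinarith [Real.sin_sq_add_cos_sq (c/2),
      Real.cos_pos_of_mem_Ioo (show c/2 ∈ Set.Ioo (-(π/2)) (π/2) from ⟨by linarith [hc.1], hhalf⟩)]
  rw [Real.sin_neg, Real.cos_neg, Real.log_div (by linarith) (by linarith)]
  ring_nf

theorem single_segment_average_partial (c : ℝ) (hc : c ∈ Set.Ioo 0 π) :
    (∀ φ ∈ Set.Icc 0 c, ∃ t ∈ Set.Icc 0 (1 / Real.cos (c/2)),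
        Inspects (t • Ppt (c/2)) φ) ∧
    (1/c) * (∫ φ in (0:ℝ)..c,
        sInf {t : ℝ | t ∈ Set.Icc 0 (1 / Real.cos (c/2)) ∧ Inspects (t • Ppt (c/2)) φ})
      = (1/c) * Real.log ((1 + Real.sin (c/2)) / (1 - Real.sin (c/2))) := by
  have hpi := Real.pi_pos
  have hcc : 0 < Real.cos (c/2) :=
    Real.cos_pos_of_mem_Ioo ⟨by linarith [hc.1], by linarith [hc.2]⟩
  -- basic facts for each φ ∈ [0, c]
  have hkey : ∀ φ ∈ Set.Icc (0:ℝ) c, Real.cos (c/2) ≤ Real.cos (φ - c/2) := by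
    intro φ hφ
    rw [← Real.cos_abs (φ - c/2)]
    exact Real.cos_le_cos_of_nonneg_of_le_pi (abs_nonneg _) (by linarith [hc.2])
      (abs_le.mpr ⟨by linarith [hφ.1], by linarith [hφ.2]⟩)
  have hcφ : ∀ φ ∈ Set.Icc (0:ℝ) c, 0 < Real.cos (φ - c/2) :=
    fun φ hφ => lt_of_lt_of_le hcc (hkey φ hφ)
  have haM : ∀ φ ∈ Set.Icc (0:ℝ) c,
      1 / Real.cos (φ - c/2) ≤ 1 / Real.cos (c/2) :=
    fun φ hφ => one_div_le_one_div_of_le hcc (hkey φ hφ)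
  have ha1 : ∀ φ ∈ Set.Icc (0:ℝ) c, 1 ≤ 1 / Real.cos (φ - c/2) := by
    intro φ hφ
    rw [le_div_iff₀ (hcφ φ hφ)]
    simpa using Real.cos_le_one (φ - c/2)
  have hins : ∀ φ ∈ Set.Icc (0:ℝ) c,
      Inspects ((1 / Real.cos (φ - c/2)) • Ppt (c/2)) φ := by
    intro φ hφ
    refine inspects_of_le _ _ _ ?_ (ha1 φ hφ)
    rw [one_div_mul_cancel (ne_of_gt (hcφ φ hφ))]
  -- set description
  have hset : ∀ φ ∈ Set.Icc (0:ℝ) c,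
      {t : ℝ | t ∈ Set.Icc 0 (1 / Real.cos (c/2)) ∧ Inspects (t • Ppt (c/2)) φ}
        = Set.Icc (1 / Real.cos (φ - c/2)) (1 / Real.cos (c/2)) := by
    intro φ hφ
    ext t
    simp only [Set.mem_setOf_eq, Set.mem_Icc]
    constructor
    · rintro ⟨⟨ht0, htM⟩, hi⟩
      refine ⟨?_, htM⟩
      rw [div_le_iff₀ (hcφ φ hφ)]
      exact le_of_inspects t (c/2) φ ht0 (hcφ φ hφ) hi
    · rintro ⟨hta, htM⟩
      have ht1 : 1 ≤ t := le_trans (ha1 φ hφ) hta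
      refine ⟨⟨by linarith, htM⟩, ?_⟩
      refine inspects_of_le _ _ _ ?_ ht1
      rwa [div_le_iff₀ (hcφ φ hφ)] at hta
  constructor
  · intro φ hφ
    exact ⟨1 / Real.cos (φ - c/2), ⟨(one_div_pos.mpr (hcφ φ hφ)).le, haM φ hφ⟩, hins φ hφ⟩
  · congr 1
    have heq : ∀ φ ∈ Set.uIcc (0:ℝ) c,
        sInf {t : ℝ | t ∈ Set.Icc 0 (1 / Real.cos (c/2)) ∧ Inspects (t • Ppt (c/2)) φ}
          = 1 / Real.cos (φ - c/2) := by
      intro φ hφ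
      rw [Set.uIcc_of_le hc.1.le] at hφ
      rw [hset φ hφ, csInf_Icc (haM φ hφ)]
    rw [intervalIntegral.integral_congr heq]
    have := intervalIntegral.integral_comp_sub_right (fun θ => 1 / Real.cos θ) (c/2)
      (a := 0) (b := c)
    rw [this]
    rw [show (0:ℝ) - c/2 = -(c/2) by ring, show c - c/2 = c/2 by ring]
    exact sec_integral c hc
end
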